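/- Let γ > 0 be a real number and define h(α) = α(1 − α)/(γ + α) for α ∈ (0, 1). Then h is concave on (0, 1), the point α* = −γ + √(γ(γ + 1)) lies in (0, 1), and for every α ∈ (0, 1) one has h(α) ≤ h(α*) = 1 + 2γ − 2√(γ(γ + 1)). -/

import Mathlib

theorem effective_snr_optimization (γ : ℝ) (hγ : 0 < γ) :
    let h : ℝ → ℝ := fun α => α * (1 - α) / (γ + α)
    let αs : ℝ := -γ + Real.sqrt (γ * (γ + 1))
    ConcaveOn ℝ (Set.Ioo (0 : ℝ) 1) h ∧
    αs ∈ Set.Ioo (0 : ℝ) 1 ∧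
    (∀ α ∈ Set.Ioo (0 : ℝ) 1, h α ≤ h αs) ∧
    h αs = 1 + 2 * γ - 2 * Real.sqrt (γ * (γ + 1)) := by
  intro h αs
  have hsq : Real.sqrt (γ * (γ + 1)) ^ 2 = γ * (γ + 1) := by
    rw [Real.sq_sqrt]; positivity
  set s := Real.sqrt (γ * (γ + 1)) with hs
  have hs0 : 0 < s := Real.sqrt_pos.mpr (by positivity)
  have hsγ : γ < s := by nlinarith
  have hs1 : s < γ + 1 := by nlinarith
  have hmem : αs ∈ Set.Ioo (0:ℝ) 1 := ⟨by simp [αs]; linarith, by simp [αs]; linarith⟩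
  have hden : (0:ℝ) < γ + αs := by have := hmem.1; linarith
  have hval : h αs = 1 + 2 * γ - 2 * s := by
    show αs * (1 - αs) / (γ + αs) = _
    have hαs : γ + αs = s := by simp [αs, hs]
    rw [hαs]
    field_simp
    nlinarith
  refine ⟨?_, hmem, ?_, hval⟩
  · refine ⟨convex_Ioo 0 1, ?_⟩
    rintro x ⟨hx0, hx1⟩ y ⟨hy0, hy1⟩ a b ha hb hab
    simp only [smul_eq_mul, h]
    have hdx : (0:ℝ) < γ + x := by linarith
    have hdy : (0:ℝ) < γ + y := by linarith
    have hdz : (0:ℝ) < γ + (a * x + b * y) := by nlinarith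
    rw [mul_div_assoc', mul_div_assoc', div_add_div _ _ (ne_of_gt hdx) (ne_of_gt hdy), div_le_div_iff₀ (by positivity) hdz]
    obtain rfl : b = 1 - a := by linarith
    nlinarith [mul_nonneg (mul_nonneg (mul_nonneg ha (by linarith : (0:ℝ) ≤ 1 - a)) (sq_nonneg (x - y))) (by positivity : (0:ℝ) ≤ γ * (γ + 1))]
  · rintro α ⟨hα0, hα1⟩
    have hdα : (0:ℝ) < γ + α := by linarith
    rw [hval]
    show α * (1 - α) / (γ + α) ≤ _
    rw [div_le_iff₀ hdα]
    nlinarith [sq_nonneg (γ + α - s)]
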